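/- Every extendible proposition A is IPC-prime: if IPC ⊢ A → (B ∨ C) then IPC ⊢ A → B or IPC ⊢ A → C. -/

import Mathlib

inductive Fm : Type
  | bot : Fm
  | atom : ℕ → Fm
  | and : Fm → Fm → Fm
  | or : Fm → Fm → Fm
  | imp : Fm → Fm → Fm
deriving DecidableEq

namespace Fm

def neg (A : Fm) : Fm := A.imp .bot
def top : Fm := Fm.bot.imp .bot
def iff (A B : Fm) : Fm := (A.imp B).and (B.imp A)

def subst (θ : ℕ → Fm) : Fm → Fm
  | bot => bot
  | atom n => θ n
  | and A B => (A.subst θ).and (B.subst θ)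
  | or A B => (A.subst θ).or (B.subst θ)
  | imp A B => (A.subst θ).imp (B.subst θ)

def atoms : Fm → Finset ℕ
  | bot => ∅
  | atom n => {n}
  | and A B => A.atoms ∪ B.atoms
  | or A B => A.atoms ∪ B.atoms
  | imp A B => A.atoms ∪ B.atoms

/-- maximal nesting of implications in the left/overall: `c→`. -/
def cimp : Fm → ℕ
  | bot => 0
  | atom _ => 0
  | and A B => max A.cimp B.cimp
  | or A B => max A.cimp B.cimp
  | imp A B => 1 + max A.cimp B.cimp

end Fm

def bigAndL (l : List Fm) : Fm := l.foldr Fm.and Fm.top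
def bigOrL (l : List Fm) : Fm := l.foldr Fm.or Fm.bot

/-- nonempty disjunction -/
def bigOrNE : Fm → List Fm → Fm
  | A, [] => A
  | A, B :: l => A.or (bigOrNE B l)

/-- Hilbert-style intuitionistic propositional calculus. -/
inductive IPC : Fm → Prop
  | imp_k (A B : Fm) : IPC (A.imp (B.imp A))
  | imp_s (A B C : Fm) : IPC ((A.imp (B.imp C)).imp ((A.imp B).imp (A.imp C)))
  | and_intro (A B : Fm) : IPC (A.imp (B.imp (A.and B)))
  | and_left (A B : Fm) : IPC ((A.and B).imp A)
  | and_right (A B : Fm) : IPC ((A.and B).imp B)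
  | or_inl (A B : Fm) : IPC (A.imp (A.or B))
  | or_inr (A B : Fm) : IPC (B.imp (A.or B))
  | or_elim (A B C : Fm) : IPC ((A.imp C).imp ((B.imp C).imp ((A.or B).imp C)))
  | exfalso (A : Fm) : IPC (Fm.bot.imp A)
  | mp {A B : Fm} : IPC (A.imp B) → IPC A → IPC B

/-- Γ-preservativity in the logic T : `A ⊳_{T,Γ} B`. -/
def Pres (T : Fm → Prop) (Γ : Set Fm) (A B : Fm) : Prop :=
  ∀ E ∈ Γ, T (E.imp A) → T (E.imp B)

/-- substitutions are identity on the parameters. -/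
def IdOnPar (par : Finset ℕ) (θ : ℕ → Fm) : Prop :=
  ∀ p ∈ par, θ p = Fm.atom p

/-- implication-free formulas. -/
inductive NI : Fm → Prop
  | bot : NI .bot
  | atom (n : ℕ) : NI (.atom n)
  | and {A B : Fm} : NI A → NI B → NI (A.and B)
  | or {A B : Fm} : NI A → NI B → NI (A.or B)

/-- No Nested Implications in the Left. -/
inductive NNIL : Fm → Prop
  | bot : NNIL .bot
  | atom (n : ℕ) : NNIL (.atom n)
  | and {A B : Fm} : NNIL A → NNIL B → NNIL (A.and B)
  | or {A B : Fm} : NNIL A → NNIL B → NNIL (A.or B)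
  | imp {A B : Fm} : NI A → NNIL B → NNIL (A.imp B)

def IPCPrime (A : Fm) : Prop :=
  ∀ B C, IPC (A.imp (B.or C)) → IPC (A.imp B) ∨ IPC (A.imp C)

/-- T-components: `⋀Γ ∧ ⋀Δ`, Γ atoms, Δ implications with atomic
antecedents not T-provable from Γ. -/
def IsComponentOver (T : Fm → Prop) (B : Fm) : Prop :=
  ∃ (as : List ℕ) (imps : List (ℕ × Fm)),
    B = (bigAndL (as.map Fm.atom)).and
          (bigAndL (imps.map fun p => (Fm.atom p.1).imp p.2)) ∧
    ∀ p ∈ imps, ¬ T ((bigAndL (as.map Fm.atom)).imp (Fm.atom p.1))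

structure KModel : Type 1 where
  W : Type
  le : W → W → Prop
  val : W → ℕ → Prop

namespace KModel

def force (K : KModel) : Fm → K.W → Prop
  | .bot, _ => False
  | .atom n, w => K.val w n
  | .and A B, w => K.force A w ∧ K.force B w
  | .or A B, w => K.force A w ∨ K.force B w
  | .imp A B, w => ∀ u, K.le w u → K.force A u → K.force B u

def IsIPC (K : KModel) : Prop :=
  (∀ w, K.le w w) ∧ (∀ {w u v}, K.le w u → K.le u v → K.le w v) ∧
  (∀ {w u}, K.le w u → K.le u w → w = u) ∧
  (∀ {w u} (a : ℕ), K.le w u → K.val w a → K.val u a)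

def Rooted (K : KModel) : Prop := ∃ r, ∀ w, K.le r w

def Tree (K : KModel) : Prop :=
  ∀ w, {u | K.le u w}.Finite ∧
    ∀ u v, K.le u w → K.le v w → K.le u v ∨ K.le v u

/-- finite rooted tree intuitionistic Kripke model. -/
def IsFRT (K : KModel) : Prop := K.IsIPC ∧ Finite K.W ∧ K.Rooted ∧ K.Tree

end KModel

/-- θ(K): same frame, valuation given by forcing of θ(a). -/
def substModel (θ : ℕ → Fm) (K : KModel) : KModel :=
  ⟨K.W, K.le, fun w a => K.force (θ a) w⟩

/-- disjoint sum of a family of models with a fresh root `none`,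
whose valuation at the root is `V0`. -/
def sumModel {ι : Type} (M : ι → KModel) (V0 : ℕ → Prop) : KModel where
  W := Option (Σ i, (M i).W)
  le := fun x y =>
    x = none ∨ ∃ i w u, x = some ⟨i, w⟩ ∧ y = some ⟨i, u⟩ ∧ (M i).le w u
  val := fun x a => match x with
    | none => V0 a
    | some ⟨i, w⟩ => (M i).val w a

/-- A is extendible: any finite family of (finite rooted tree) models of A
can be summed with a fresh root whose valuation (monotonely chosen)
can be arranged so that the sum is again a model of A. -/
def Extendible (A : Fm) : Prop :=
  ∀ (ι : Type), Finite ι → ∀ (M : ι → KModel),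
    (∀ i, (M i).IsFRT ∧ ∀ w, (M i).force A w) →
    ∃ V0 : ℕ → Prop, (∀ a, V0 a → ∀ i w, (M i).val w a) ∧
      ∀ w, (sumModel M V0).force A w

namespace IPC

theorem idem (A : Fm) : IPC (A.imp A) :=
  .mp (.mp (.imp_s A (A.imp A) A) (.imp_k A (A.imp A))) (.imp_k A A)

theorem wk {A : Fm} (X : Fm) (h : IPC A) : IPC (X.imp A) :=
  .mp (.imp_k A X) h

theorem mp2 {X A B : Fm} (h1 : IPC (X.imp (A.imp B))) (h2 : IPC (X.imp A)) :
    IPC (X.imp B) := .mp (.mp (.imp_s X A B) h1) h2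

theorem trans {A B C : Fm} (h1 : IPC (A.imp B)) (h2 : IPC (B.imp C)) :
    IPC (A.imp C) := mp2 (wk A h2) h1

theorem mp2C {Y X A B : Fm} (h1 : IPC (Y.imp (X.imp (A.imp B))))
    (h2 : IPC (Y.imp (X.imp A))) : IPC (Y.imp (X.imp B)) :=
  mp2 (mp2 (wk Y (.imp_s X A B)) h1) h2

theorem flip {A X E : Fm} (h : IPC (A.imp (X.imp E))) : IPC (X.imp (A.imp E)) :=
  mp2C (wk X h) (.imp_k X A)

/-- deduction-style export -/
theorem ded {A X E : Fm} (h : IPC ((A.and X).imp E)) : IPC (X.imp (A.imp E)) :=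
  flip (mp2C (wk A (wk X h)) (.and_intro A X))

theorem ded' {A X E : Fm} (h : IPC (X.imp (A.imp E))) : IPC ((A.and X).imp E) :=
  mp2 (trans (.and_right A X) h) (.and_left A X)

end IPC

theorem bigAnd_mem {l : List Fm} {D : Fm} (h : D ∈ l) :
    IPC ((bigAndL l).imp D) := by
  induction l with
  | nil => cases h
  | cons a t ih =>
    rcases List.mem_cons.1 h with rfl | h
    · exact .and_left _ _
    · exact IPC.trans (.and_right _ _) (ih h)

theorem bigAnd_intro {l : List Fm} {X : Fm} (h : ∀ D ∈ l, IPC (X.imp D)) :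
    IPC (X.imp (bigAndL l)) := by
  induction l with
  | nil => exact IPC.wk X (IPC.idem .bot)
  | cons a t ih =>
    exact IPC.mp2 (IPC.mp2 (IPC.wk X (.and_intro a (bigAndL t)))
      (h a (by simp))) (ih fun D hD => h D (by simp [hD]))

noncomputable def conjF (Γ : Finset Fm) : Fm := bigAndL Γ.toList

theorem conjF_mem {Γ : Finset Fm} {D : Fm} (h : D ∈ Γ) : IPC ((conjF Γ).imp D) :=
  bigAnd_mem (by simpa using h)

theorem conjF_intro {Γ : Finset Fm} {X : Fm} (h : ∀ D ∈ Γ, IPC (X.imp D)) :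
    IPC (X.imp (conjF Γ)) := bigAnd_intro (by simpa using h)

theorem conjF_mono {Γ Δ : Finset Fm} (h : Γ ⊆ Δ) : IPC ((conjF Δ).imp (conjF Γ)) :=
  conjF_intro fun D hD => conjF_mem (h hD)
def Sfm : Fm → Finset Fm
  | .bot => {.bot}
  | .atom n => {.atom n}
  | .and A B => insert (A.and B) (Sfm A ∪ Sfm B)
  | .or A B => insert (A.or B) (Sfm A ∪ Sfm B)
  | .imp A B => insert (A.imp B) (Sfm A ∪ Sfm B)

theorem self_mem_Sfm (A : Fm) : A ∈ Sfm A := by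
  cases A <;> simp [Sfm]

theorem Sfm_trans : ∀ {A B : Fm}, B ∈ Sfm A → Sfm B ⊆ Sfm A := by
  intro A
  induction A with
  | bot => intro B h; simp [Sfm] at h; subst h; simp [Sfm]
  | atom n => intro B h; simp [Sfm] at h; subst h; simp [Sfm]
  | and A1 A2 ih1 ih2 =>
    intro B h
    simp only [Sfm, Finset.mem_insert, Finset.mem_union] at h
    rcases h with rfl | h | h
    · exact fun x hx => hx
    · exact fun x hx => by
        simp only [Sfm, Finset.mem_insert, Finset.mem_union]
        exact Or.inr (Or.inl (ih1 h hx))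
    · exact fun x hx => by
        simp only [Sfm, Finset.mem_insert, Finset.mem_union]
        exact Or.inr (Or.inr (ih2 h hx))
  | or A1 A2 ih1 ih2 =>
    intro B h
    simp only [Sfm, Finset.mem_insert, Finset.mem_union] at h
    rcases h with rfl | h | h
    · exact fun x hx => hx
    · exact fun x hx => by
        simp only [Sfm, Finset.mem_insert, Finset.mem_union]
        exact Or.inr (Or.inl (ih1 h hx))
    · exact fun x hx => by
        simp only [Sfm, Finset.mem_insert, Finset.mem_union]
        exact Or.inr (Or.inr (ih2 h hx))
  | imp A1 A2 ih1 ih2 =>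
    intro B h
    simp only [Sfm, Finset.mem_insert, Finset.mem_union] at h
    rcases h with rfl | h | h
    · exact fun x hx => hx
    · exact fun x hx => by
        simp only [Sfm, Finset.mem_insert, Finset.mem_union]
        exact Or.inr (Or.inl (ih1 h hx))
    · exact fun x hx => by
        simp only [Sfm, Finset.mem_insert, Finset.mem_union]
        exact Or.inr (Or.inr (ih2 h hx))

/-- subformula-closed set -/
def SubClosed (S : Finset Fm) : Prop := ∀ D ∈ S, Sfm D ⊆ S

theorem SubClosed_Sfm (A : Fm) : SubClosed (Sfm A) := fun _ h => Sfm_trans h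

theorem SubClosed.union {S T : Finset Fm} (hS : SubClosed S) (hT : SubClosed T) :
    SubClosed (S ∪ T) := by
  intro D hD
  rcases Finset.mem_union.1 hD with h | h
  · exact (hS D h).trans Finset.subset_union_left
  · exact (hT D h).trans Finset.subset_union_right

section Canon
variable (S : Finset Fm)

/-- saturated subsets of S -/
def Sat (Γ : Finset Fm) : Prop :=
  Γ ⊆ S ∧ (∀ D ∈ S, IPC ((conjF Γ).imp D) → D ∈ Γ) ∧
  ¬ IPC ((conjF Γ).imp .bot) ∧
  (∀ D E : Fm, D.or E ∈ Γ → D ∈ Γ ∨ E ∈ Γ)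

theorem ded_insert {Δ : Finset Fm} {F E : Fm}
    (h : IPC ((conjF (insert F Δ)).imp E)) : IPC ((conjF Δ).imp (F.imp E)) :=
  IPC.ded (IPC.trans (conjF_intro fun D hD => by
    rcases Finset.mem_insert.1 hD with rfl | hD
    · exact .and_left _ _
    · exact IPC.trans (.and_right _ _) (conjF_mem hD)) h)

theorem lindenbaum (hS : SubClosed S) {Γ : Finset Fm} {E : Fm} (hΓS : Γ ⊆ S)
    (hcons : ¬ IPC ((conjF Γ).imp E)) :
    ∃ Δ : Finset Fm, Sat S Δ ∧ Γ ⊆ Δ ∧ ¬ IPC ((conjF Δ).imp E) := by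
  classical
  set cand : Finset (Finset Fm) :=
    S.powerset.filter (fun Δ => Γ ⊆ Δ ∧ ¬ IPC ((conjF Δ).imp E)) with hcand
  have hΓ : Γ ∈ cand := by
    simp [hcand, Finset.mem_filter, Finset.mem_powerset, hΓS, hcons]
  obtain ⟨Δ, hΔ, hmax'⟩ := Finset.exists_maximal (s := cand) ⟨Γ, hΓ⟩
  have hmax : ∀ x ∈ cand, ¬ Δ < x := fun x hx hlt => hlt.2 (hmax' hx hlt.1)
  simp only [hcand, Finset.mem_filter, Finset.mem_powerset] at hΔ
  obtain ⟨hΔS, hΓΔ, hΔE⟩ := hΔ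
  -- any strict superset within S proves E
  have key : ∀ D ∈ S, D ∉ Δ → IPC ((conjF (insert D Δ)).imp E) := by
    intro D hDS hDΔ
    by_contra hne
    have : insert D Δ ∈ cand := by
      simp only [hcand, Finset.mem_filter, Finset.mem_powerset]
      exact ⟨Finset.insert_subset hDS hΔS, hΓΔ.trans (Finset.subset_insert _ _), hne⟩
    exact hmax _ this (Finset.ssubset_insert hDΔ)
  have closed : ∀ D ∈ S, IPC ((conjF Δ).imp D) → D ∈ Δ := by
    intro D hDS hpf
    by_contra hDΔ
    have h1 : IPC ((conjF Δ).imp (conjF (insert D Δ))) :=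
      conjF_intro fun F hF => by
        rcases Finset.mem_insert.1 hF with rfl | hF
        · exact hpf
        · exact conjF_mem hF
    exact hΔE (IPC.trans h1 (key D hDS hDΔ))
  refine ⟨Δ, ⟨hΔS, closed, ?_, ?_⟩, hΓΔ, hΔE⟩
  · intro hb
    exact hΔE (IPC.trans hb (.exfalso E))
  · intro F G hFG
    by_contra hc
    push_neg at hc
    obtain ⟨hF, hG⟩ := hc
    have hFGS : F.or G ∈ S := hΔS hFG
    have hFS : F ∈ S := hS _ hFGS (by simp [Sfm, self_mem_Sfm])
    have hGS : G ∈ S := hS _ hFGS (by simp [Sfm, self_mem_Sfm])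
    have dF : IPC ((conjF Δ).imp (F.imp E)) := ded_insert (key F hFS hF)
    have dG : IPC ((conjF Δ).imp (G.imp E)) := ded_insert (key G hGS hG)
    exact hΔE (IPC.mp2 (IPC.mp2 (IPC.mp2 (IPC.wk _ (.or_elim F G E)) dF) dG)
      (conjF_mem hFG))
end Canon
section Canon2
variable (S : Finset Fm)

def W0 : Type := {Γ : Finset Fm // Sat S Γ}

@[reducible] noncomputable def K0 : KModel where
  W := W0 S
  le := fun Γ Δ => Γ.1 ⊆ Δ.1
  val := fun Γ n => Fm.atom n ∈ Γ.1

instance finiteW0 : Finite (W0 S) := by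
  refine Finite.of_injective
    (fun Γ => (⟨Γ.1, Finset.mem_powerset.2 Γ.2.1⟩ : {x // x ∈ S.powerset}))
    fun Γ Δ h => ?_
  exact Subtype.ext (by simpa using congrArg Subtype.val h)

theorem truth (hS : SubClosed S) : ∀ D ∈ S, ∀ Γ : W0 S,
    ((K0 S).force D Γ ↔ D ∈ Γ.1) := by
  intro D
  induction D with
  | bot =>
    intro _ Γ
    simp only [KModel.force]
    constructor
    · intro h; exact h.elim
    · intro h; exact Γ.2.2.2.1 (conjF_mem h)
  | atom n => intro _ Γ; exact Iff.rfl
  | and D E ihD ihE =>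
    intro hDE Γ
    have hD : D ∈ S := hS _ hDE (by simp [Sfm, self_mem_Sfm])
    have hE : E ∈ S := hS _ hDE (by simp [Sfm, self_mem_Sfm])
    simp only [KModel.force]
    rw [ihD hD Γ, ihE hE Γ]
    constructor
    · rintro ⟨h1, h2⟩
      exact Γ.2.2.1 _ hDE (IPC.mp2 (IPC.mp2 (IPC.wk _ (.and_intro D E))
        (conjF_mem h1)) (conjF_mem h2))
    · intro h
      exact ⟨Γ.2.2.1 _ hD (IPC.trans (conjF_mem h) (.and_left D E)),
        Γ.2.2.1 _ hE (IPC.trans (conjF_mem h) (.and_right D E))⟩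
  | or D E ihD ihE =>
    intro hDE Γ
    have hD : D ∈ S := hS _ hDE (by simp [Sfm, self_mem_Sfm])
    have hE : E ∈ S := hS _ hDE (by simp [Sfm, self_mem_Sfm])
    simp only [KModel.force]
    rw [ihD hD Γ, ihE hE Γ]
    constructor
    · rintro (h | h)
      · exact Γ.2.2.1 _ hDE (IPC.trans (conjF_mem h) (.or_inl D E))
      · exact Γ.2.2.1 _ hDE (IPC.trans (conjF_mem h) (.or_inr D E))
    · intro h; exact Γ.2.2.2.2 D E h
  | imp D E ihD ihE =>
    intro hDE Γ
    have hD : D ∈ S := hS _ hDE (by simp [Sfm, self_mem_Sfm])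
    have hE : E ∈ S := hS _ hDE (by simp [Sfm, self_mem_Sfm])
    constructor
    · intro h
      by_contra hmem
      have hnp : ¬ IPC ((conjF Γ.1).imp (D.imp E)) :=
        fun hp => hmem (Γ.2.2.1 _ hDE hp)
      have hnp2 : ¬ IPC ((conjF (insert D Γ.1)).imp E) :=
        fun hp => hnp (ded_insert hp)
      obtain ⟨Δ, hSat, hsub, hΔE⟩ := lindenbaum S hS
        (Finset.insert_subset hD Γ.2.1) hnp2
      have hDΔ : D ∈ Δ := hsub (Finset.mem_insert_self _ _)
      have hEΔ : E ∉ Δ := fun hmm => hΔE (conjF_mem hmm)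
      have hle : (K0 S).le Γ ⟨Δ, hSat⟩ :=
        fun x hx => hsub (Finset.mem_insert_of_mem hx)
      have := h ⟨Δ, hSat⟩ hle ((ihD hD ⟨Δ, hSat⟩).2 hDΔ)
      exact hEΔ ((ihE hE ⟨Δ, hSat⟩).1 this)
    · intro h Δ hle hDf
      have hDΔ : D ∈ Δ.1 := (ihD hD Δ).1 hDf
      refine (ihE hE Δ).2 (Δ.2.2.1 _ hE ?_)
      exact IPC.mp2 (conjF_mem (hle h)) (conjF_mem hDΔ)

end Canon2
section Sound
variable {K : KModel}

def Nice (K : KModel) : Prop :=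
  (∀ w, K.le w w) ∧ (∀ {w u v}, K.le w u → K.le u v → K.le w v) ∧
  (∀ {w u} (a : ℕ), K.le w u → K.val w a → K.val u a)

theorem persist (hK : Nice K) {w u : K.W} (hle : K.le w u) :
    ∀ {D : Fm}, K.force D w → K.force D u := by
  intro D
  induction D generalizing w u with
  | bot => exact id
  | atom n => exact hK.2.2 n hle
  | and D E ihD ihE => exact fun h => ⟨ihD hle h.1, ihE hle h.2⟩
  | or D E ihD ihE =>
    rintro (h | h)
    · exact Or.inl (ihD hle h)
    · exact Or.inr (ihE hle h)
  | imp D E ihD ihE =>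
    intro h v hv hD
    exact h v (hK.2.1 hle hv) hD

theorem soundness {D : Fm} (h : IPC D) (hK : Nice K) (w : K.W) :
    K.force D w := by
  induction h generalizing w with
  | imp_k A B => exact fun u hu hA v hv hB => persist hK hv hA
  | imp_s A B C =>
    intro u hu h1 v hv h2 x hx hA
    exact h1 x (hK.2.1 hv hx) hA x (hK.1 x) (h2 x hx hA)
  | and_intro A B => exact fun u hu hA v hv hB => ⟨persist hK hv hA, hB⟩
  | and_left A B => exact fun u hu h => h.1
  | and_right A B => exact fun u hu h => h.2
  | or_inl A B => exact fun u hu h => Or.inl h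
  | or_inr A B => exact fun u hu h => Or.inr h
  | or_elim A B C =>
    intro u hu h1 v hv h2 x hx h3
    rcases h3 with h | h
    · exact h1 x (hK.2.1 hv hx) h
    · exact h2 x hx h
  | exfalso A => exact fun u hu h => h.elim
  | mp hAB hA ihAB ihA => exact ihAB w w (hK.1 w) (ihA w)

end Sound

/-- forcing in the sum at an embedded node agrees with the component. -/
theorem sum_force {ι : Type} (M : ι → KModel) (V0 : ℕ → Prop) :
    ∀ (D : Fm) (i : ι) (w : (M i).W),
      ((sumModel M V0).force D (some ⟨i, w⟩) ↔ (M i).force D w) := by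
  intro D
  induction D with
  | bot => intro i w; exact Iff.rfl
  | atom n => intro i w; exact Iff.rfl
  | and D E ihD ihE => intro i w; exact and_congr (ihD i w) (ihE i w)
  | or D E ihD ihE => intro i w; exact or_congr (ihD i w) (ihE i w)
  | imp D E ihD ihE =>
    intro i w
    constructor
    · intro h u hu hD
      have := h (some ⟨i, u⟩) (Or.inr ⟨i, w, u, rfl, rfl, hu⟩) ((ihD i u).2 hD)
      exact (ihE i u).1 this
    · rintro h x (hx | ⟨j, a, b, hab, rfl, hle⟩) hD
      · exact absurd hx (by simp)
      · injection hab with h2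
        cases h2
        exact (ihE i b).2 (h b hle ((ihD i b).1 hD))
section TreeSec
variable (S : Finset Fm) (Δ0 : W0 S)

def Rs : W0 S → W0 S → Prop := fun Γ Δ => Γ.1 ⊂ Δ.1

instance : IsTrans (W0 S) (Rs S) := ⟨fun _ _ _ h1 h2 => h1.trans h2⟩

def TW : Type := {l : List (W0 S) // l.Chain' (Rs S) ∧ l.head? = some Δ0}

theorem TW.ne_nil (l : TW S Δ0) : l.1 ≠ [] := by
  intro h
  have := l.2.2
  rw [h] at this
  exact absurd this (by simp)

noncomputable def lastW (l : TW S Δ0) : W0 S := l.1.getLastD Δ0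

theorem getLastD_mem {α : Type} (d : α) : ∀ (l : List α), l ≠ [] → l.getLastD d ∈ l := by
  intro l
  induction l with
  | nil => intro h; exact absurd rfl h
  | cons a t ih =>
    intro _
    cases t with
    | nil => simp
    | cons b t' => simpa using Or.inr (ih (by simp))

theorem getLast?_eq_getLastD {α : Type} (d : α) :
    ∀ (l : List α), l ≠ [] → l.getLast? = some (l.getLastD d) := by
  intro l
  induction l with
  | nil => intro h; exact absurd rfl h
  | cons a t ih =>
    intro _
    cases t with
    | nil => rfl
    | cons b t' =>
      rw [List.getLast?_cons_cons, List.getLastD_cons, ih (by simp)]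
      congr 1

theorem getLastD_concat' {α : Type} (d u : α) :
    ∀ (l : List α), (l ++ [u]).getLastD d = u := by
  intro l
  induction l with
  | nil => rfl
  | cons a t ih =>
    cases t with
    | nil => rfl
    | cons b t' => simpa using ih

theorem chain_sub_getLastD : ∀ (m : List (W0 S)), m.Chain' (Rs S) →
    ∀ x ∈ m, x.1 ⊆ (m.getLastD Δ0).1 := by
  intro m
  induction m with
  | nil => intro _ x hx; cases hx
  | cons a t ih =>
    intro hc x hx
    cases t with
    | nil =>
      simp only [List.mem_singleton] at hx
      subst hx; simp
    | cons b t' =>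
      have hab : (Rs S) a b := (List.isChain_cons_cons.1 hc).1
      have hc' := (List.isChain_cons_cons.1 hc).2
      rcases List.mem_cons.1 hx with rfl | hx
      · exact (hab.subset).trans (ih hc' b (by simp))
      · exact ih hc' x hx


theorem lastW_mono {l m : TW S Δ0} (h : l.1 <+: m.1) :
    (lastW S Δ0 l).1 ⊆ (lastW S Δ0 m).1 := by
  have hmem : l.1.getLastD Δ0 ∈ m.1 :=
    h.subset (getLastD_mem Δ0 l.1 (TW.ne_nil S Δ0 l))
  exact chain_sub_getLastD S Δ0 m.1 m.2.1 _ hmem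

theorem TW_list_eq (l : TW S Δ0) : ∃ t, l.1 = Δ0 :: t := by
  cases hl : l.1 with
  | nil => exact absurd hl (TW.ne_nil S Δ0 l)
  | cons a t =>
    have := l.2.2
    rw [hl] at this
    simp only [List.head?_cons, Option.some.injEq] at this
    exact ⟨t, by rw [this]⟩

theorem root_sub_lastW (l : TW S Δ0) : Δ0.1 ⊆ (lastW S Δ0 l).1 := by
  have : Δ0 ∈ l.1 := by
    obtain ⟨t, ht⟩ := TW_list_eq S Δ0 l
    rw [ht]; simp
  exact chain_sub_getLastD S Δ0 l.1 l.2.1 _ this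

noncomputable def KT : KModel where
  W := TW S Δ0
  le := fun l m => l.1 <+: m.1
  val := fun l n => Fm.atom n ∈ (lastW S Δ0 l).1

instance finiteTW : Finite (TW S Δ0) := by
  have hmem : ∀ l : TW S Δ0, l.1 ∈ {l : List (W0 S) | l.length ≤ Nat.card (W0 S)} := by
    intro l
    have hnd : l.1.Nodup := by
      have hp : l.1.Pairwise (Rs S) := List.isChain_iff_pairwise.1 l.2.1
      exact hp.imp fun h => fun he => by rw [he] at h; exact h.2 h.1
    have : Fintype (W0 S) := Fintype.ofFinite _
    rw [Set.mem_setOf_eq, Nat.card_eq_fintype_card]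
    exact hnd.length_le_card
  have hfin : {l : List (W0 S) | l.length ≤ Nat.card (W0 S)}.Finite :=
    List.finite_length_le _ _
  haveI := hfin.to_subtype
  exact Finite.of_injective (fun l => (⟨l.1, hmem l⟩ : {x // x ∈ _})) fun a b h => by
    exact Subtype.ext (by simpa using congrArg Subtype.val h)

theorem KT_isFRT : (KT S Δ0).IsFRT := by
  refine ⟨⟨fun w => List.prefix_refl _, fun h1 h2 => h1.trans h2, ?_, ?_⟩,
    finiteTW S Δ0, ?_, ?_⟩
  · intro w u h1 h2
    exact Subtype.ext (List.IsPrefix.eq_of_length h1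
      (Nat.le_antisymm h1.length_le h2.length_le))
  · intro w u a h1 hv
    exact lastW_mono S Δ0 h1 hv
  · refine ⟨⟨[Δ0], List.isChain_singleton _, rfl⟩, ?_⟩
    intro w
    obtain ⟨t, ht⟩ := TW_list_eq S Δ0 w
    show [Δ0] <+: w.1
    rw [ht]
    exact ⟨t, rfl⟩
  · intro w
    constructor
    · haveI : Finite (KT S Δ0).W := finiteTW S Δ0
      exact Set.toFinite _
    · intro u v hu hv
      rcases Nat.le_total u.1.length v.1.length with h | h
      · exact Or.inl (List.prefix_of_prefix_length_le hu hv h)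
      · exact Or.inr (List.prefix_of_prefix_length_le hv hu h)

theorem forceT : ∀ (D : Fm) (l : TW S Δ0),
    ((KT S Δ0).force D l ↔ (K0 S).force D (lastW S Δ0 l)) := by
  intro D
  induction D with
  | bot => intro l; exact Iff.rfl
  | atom n => intro l; exact Iff.rfl
  | and D E ihD ihE => intro l; exact and_congr (ihD l) (ihE l)
  | or D E ihD ihE => intro l; exact or_congr (ihD l) (ihE l)
  | imp D E ihD ihE =>
    intro l
    constructor
    · intro h u hu hD
      by_cases hEq : u = lastW S Δ0 l
      · subst hEq
        exact (ihE l).1 (h l (List.prefix_refl _) ((ihD l).2 hD))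
      · have hss : (lastW S Δ0 l).1 ⊂ (u : W0 S).1 := by
          refine ⟨hu, fun hsub => hEq (Subtype.ext (Finset.Subset.antisymm hsub hu))⟩
        have hchain : (l.1 ++ [(u : W0 S)]).Chain' (Rs S) := by
          refine List.isChain_append.2 ?_
          refine ⟨l.2.1, List.isChain_singleton _, ?_⟩
          intro x hx y hy
          rw [getLast?_eq_getLastD Δ0 l.1 (TW.ne_nil S Δ0 l)] at hx
          rw [Option.mem_def, Option.some.injEq] at hx
          simp only [Option.mem_def, List.head?_cons, Option.some.injEq] at hy
          subst hx; subst hy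
          exact hss
        have hhead : (l.1 ++ [(u : W0 S)]).head? = some Δ0 := by
          obtain ⟨t, ht⟩ := TW_list_eq S Δ0 l
          rw [ht]; rfl
        let m : TW S Δ0 := ⟨l.1 ++ [(u : W0 S)], hchain, hhead⟩
        have hlast : lastW S Δ0 m = (u : W0 S) := getLastD_concat' Δ0 _ l.1
        have hpre : (KT S Δ0).le l m := show l.1 <+: l.1 ++ [(u : W0 S)] from ⟨_, rfl⟩
        have h2 := h m hpre ((ihD m).2 (by rw [hlast]; exact hD))
        have h3 := (ihE m).1 h2
        rwa [hlast] at h3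
    · intro h m hm hD
      have hsub : (lastW S Δ0 l).1 ⊆ (lastW S Δ0 m).1 := lastW_mono S Δ0 hm
      exact (ihE m).2 (h (lastW S Δ0 m) hsub ((ihD m).1 hD))

end TreeSec
theorem exists_root (S : Finset Fm) (hS : SubClosed S) {A X : Fm}
    (hAS : A ∈ S) (hn : ¬ IPC (A.imp X)) :
    ∃ Δ0 : W0 S, A ∈ Δ0.1 ∧ X ∉ Δ0.1 := by
  classical
  have h1 : ¬ IPC ((conjF {A}).imp X) := by
    intro hp
    refine hn (IPC.trans ?_ hp)
    refine conjF_intro fun D hD => ?_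
    rw [Finset.mem_singleton.1 hD]
    exact IPC.idem A
  obtain ⟨Δ, hSat, hsub, hΔX⟩ := lindenbaum S hS
    (by simpa using hAS) h1
  exact ⟨⟨Δ, hSat⟩, hsub (Finset.mem_singleton_self A),
    fun hm => hΔX (conjF_mem hm)⟩

theorem KT_forces (S : Finset Fm) (hS : SubClosed S) (Δ0 : W0 S) {D : Fm}
    (hDS : D ∈ S) (hD : D ∈ Δ0.1) (w : TW S Δ0) : (KT S Δ0).force D w :=
  (forceT S Δ0 D w).2 ((truth S hS D hDS _).2 (root_sub_lastW S Δ0 w hD))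

theorem sum_nice {ι : Type} (M : ι → KModel) (V0 : ℕ → Prop)
    (hM : ∀ i, (M i).IsIPC) (hV0 : ∀ a, V0 a → ∀ i w, (M i).val w a) :
    Nice (sumModel M V0) := by
  refine ⟨?_, ?_, ?_⟩
  · rintro (_ | ⟨i, w⟩)
    · exact Or.inl rfl
    · exact Or.inr ⟨i, w, w, rfl, rfl, (hM i).1 w⟩
  · rintro x y z (rfl | ⟨i, w, u, rfl, rfl, hle⟩) hyz
    · exact Or.inl rfl
    · rcases hyz with h | ⟨j, a, b, hab, rfl, hle'⟩
      · exact absurd h (by simp)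
      · injection hab with h2
        cases h2
        exact Or.inr ⟨i, w, b, rfl, rfl, (hM i).2.1 hle hle'⟩
  · rintro x y a (rfl | ⟨i, w, u, rfl, rfl, hle⟩) hv
    · rcases y with _ | ⟨i, w⟩
      · exact hv
      · exact hV0 a hv i w
    · exact (hM i).2.2.2 a hle hv

theorem stmt_13 (A : Fm) (hA : Extendible A) (B C : Fm)
    (h : IPC (A.imp (B.or C))) : IPC (A.imp B) ∨ IPC (A.imp C) := by
  classical
  by_contra hc
  push_neg at hc
  obtain ⟨hB, hC⟩ := hc
  set S : Finset Fm := Sfm A ∪ (Sfm B ∪ Sfm C) with hSdef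
  have hS : SubClosed S := (SubClosed_Sfm A).union
    ((SubClosed_Sfm B).union (SubClosed_Sfm C))
  have hAS : A ∈ S := by
    simp [hSdef, Finset.mem_union, self_mem_Sfm]
  have hBS : B ∈ S := by
    simp [hSdef, Finset.mem_union, self_mem_Sfm]
  have hCS : C ∈ S := by
    simp [hSdef, Finset.mem_union, self_mem_Sfm]
  obtain ⟨ΔB, hAB, hBB⟩ := exists_root S hS hAS hB
  obtain ⟨ΔC, hAC, hCC⟩ := exists_root S hS hAS hC
  set M : Bool → KModel := fun b => match b with
    | true => KT S ΔB
    | false => KT S ΔC with hM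
  have hMcond : ∀ i, (M i).IsFRT ∧ ∀ w, (M i).force A w := by
    intro i
    cases i
    · exact ⟨KT_isFRT S ΔC, KT_forces S hS ΔC hAS hAC⟩
    · exact ⟨KT_isFRT S ΔB, KT_forces S hS ΔB hAS hAB⟩
  obtain ⟨V0, hV0, hsum⟩ := hA Bool inferInstance M hMcond
  have hnice : Nice (sumModel M V0) :=
    sum_nice M V0 (fun i => (hMcond i).1.1) hV0
  have hroot : (sumModel M V0).force (B.or C) none :=
    soundness h hnice none none (Or.inl rfl) (hsum none)
  let rootB : TW S ΔB := ⟨[ΔB], List.isChain_singleton _, rfl⟩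
  let rootC : TW S ΔC := ⟨[ΔC], List.isChain_singleton _, rfl⟩
  rcases hroot with hF | hF
  · have h1 : (sumModel M V0).force B (some ⟨true, rootB⟩) :=
      persist hnice (Or.inl rfl) hF
    have h2 : (M true).force B rootB := (sum_force M V0 B true rootB).1 h1
    have h3 : (KT S ΔB).force B rootB := h2
    have h4 : (K0 S).force B (lastW S ΔB rootB) := (forceT S ΔB B rootB).1 h3
    exact hBB ((truth S hS B hBS _).1 h4)
  · have h1 : (sumModel M V0).force C (some ⟨false, rootC⟩) :=
      persist hnice (Or.inl rfl) hF
    have h2 : (M false).force C rootC := (sum_force M V0 C false rootC).1 h1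
    have h3 : (KT S ΔC).force C rootC := h2
    have h4 : (K0 S).force C (lastW S ΔC rootC) := (forceT S ΔC C rootC).1 h3
    exact hCC ((truth S hS C hCS _).1 h4)
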